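/- arXiv:1403.6689 — 6 statements merged into one kernel-verified Lean document; each statement's English description precedes it below -/
import Mathlib

section
/- For any infinitary propositional formula F and any interpretation I (a set of atoms), I satisfies the reduct F^I if and only if I satisfies F. -/
open Classical

/-- Infinitary propositional formulas over a signature `σ`: atoms, set-indexed
conjunctions and disjunctions (represented by families indexed by a type,
which corresponds exactly to *bounded* sets of formulas in the hierarchy),
and implication. -/
inductive IForm (σ : Type) : Type 1
  | atom : σ → IForm σ
  | conj : (ι : Type) → (ι → IForm σ) → IForm σ
  | disj : (ι : Type) → (ι → IForm σ) → IForm σ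
  | impl : IForm σ → IForm σ → IForm σ

namespace IForm

variable {σ : Type}

/-- `⊥` is the empty disjunction. -/
def bot : IForm σ := disj Empty Empty.elim

/-- `¬F` abbreviates `F → ⊥`. -/
def neg (F : IForm σ) : IForm σ := impl F bot

/-- Binary conjunction `F ∧ G` as `{F, G}^∧`. -/
def and2 (F G : IForm σ) : IForm σ := conj Bool (fun b => cond b F G)

/-- Binary disjunction `F ∨ G` as `{F, G}^∨`. -/
def or2 (F G : IForm σ) : IForm σ := disj Bool (fun b => cond b F G)

/-- Ternary disjunction. -/
def or3 (F G H : IForm σ) : IForm σ := disj (Fin 3) (fun i => [F, G, H].get i)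

/-- `F ↔ G` abbreviates `(F → G) ∧ (G → F)`. -/
def biimp (F G : IForm σ) : IForm σ := and2 (impl F G) (impl G F)

/-- Satisfaction of an infinitary formula by an interpretation `I ⊆ σ`. -/
def sat (I : Set σ) : IForm σ → Prop
  | atom p => p ∈ I
  | conj _ f => ∀ i, sat I (f i)
  | disj _ f => ∃ i, sat I (f i)
  | impl F G => sat I F → sat I G

/-- The reduct `F^I` of a formula w.r.t. an interpretation `I`. -/
noncomputable def reduct (I : Set σ) : IForm σ → IForm σ
  | atom p => if p ∈ I then atom p else bot
  | conj ι f => conj ι (fun i => reduct I (f i))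
  | disj ι f => disj ι (fun i => reduct I (f i))
  | impl F G => if sat I (impl F G) then impl (reduct I F) (reduct I G) else bot

/-- `I` satisfies a set of formulas if it satisfies all its elements. -/
def satSet (I : Set σ) (H : Set (IForm σ)) : Prop := ∀ F ∈ H, sat I F

/-- `I` is a stable model of a set `H` of formulas if it is minimal w.r.t.
set inclusion among the interpretations satisfying the reduct `H^I`. -/
def StableModel (I : Set σ) (H : Set (IForm σ)) : Prop :=
  satSet I (reduct I '' H) ∧ ∀ J : Set σ, satSet J (reduct I '' H) → J ⊆ I → J = I

noncomputable instance : DecidableEq (IForm σ) := Classical.decEq _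

/-- The basic infinitary system of natural deduction: sequents `Γ ⇒ F` where
`Γ` is a finite set of infinitary formulas.  Axiom `F ⇒ F`; introduction and
elimination rules for set-indexed conjunction and disjunction and for
implication; weakening. -/
inductive Deriv : Finset (IForm σ) → IForm σ → Prop
  | ax (F : IForm σ) : Deriv {F} F
  | conjI (Γ : Finset (IForm σ)) (ι : Type) (f : ι → IForm σ) :
      (∀ i, Deriv Γ (f i)) → Deriv Γ (conj ι f)
  | conjE (Γ : Finset (IForm σ)) (ι : Type) (f : ι → IForm σ) (i : ι) :
      Deriv Γ (conj ι f) → Deriv Γ (f i)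
  | disjI (Γ : Finset (IForm σ)) (ι : Type) (f : ι → IForm σ) (i : ι) :
      Deriv Γ (f i) → Deriv Γ (disj ι f)
  | disjE (Γ Δ : Finset (IForm σ)) (ι : Type) (f : ι → IForm σ) (F : IForm σ) :
      Deriv Γ (disj ι f) → (∀ i, Deriv (insert (f i) Δ) F) → Deriv (Γ ∪ Δ) F
  | implI (Γ : Finset (IForm σ)) (F G : IForm σ) :
      Deriv (insert F Γ) G → Deriv Γ (impl F G)
  | implE (Γ Δ : Finset (IForm σ)) (F G : IForm σ) :
      Deriv Γ F → Deriv Δ (impl F G) → Deriv (Γ ∪ Δ) G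
  | weak (Γ Δ : Finset (IForm σ)) (F : IForm σ) :
      Deriv Γ F → Deriv (Γ ∪ Δ) F

end IForm

/-- For any infinitary formula `F` and interpretation `I`,
`I` satisfies the reduct `F^I` iff `I` satisfies `F`. -/
theorem sat_reduct_iff_sat {σ : Type} (F : IForm σ) (I : Set σ) :
    IForm.sat I (IForm.reduct I F) ↔ IForm.sat I F := by

  induction F with
  | atom p =>
    by_cases h : p ∈ I <;> simp [IForm.reduct, IForm.sat, IForm.bot, h]
  | conj ι f ih =>
    simp only [IForm.reduct, IForm.sat]
    exact forall_congr' ih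
  | disj ι f ih =>
    simp only [IForm.reduct, IForm.sat]
    exact exists_congr ih
  | impl F G ihF ihG =>
    by_cases h : IForm.sat I F → IForm.sat I G
    · have h' : IForm.sat I (IForm.impl F G) := h
      simp only [IForm.reduct]
      rw [if_pos h']
      simp only [IForm.sat, ihF, ihG]
    · have h' : ¬ IForm.sat I (IForm.impl F G) := h
      simp only [IForm.reduct]
      rw [if_neg h']
      simp only [IForm.sat, IForm.bot]
      constructor
      · rintro ⟨i⟩; exact i.elim
      · exact fun hh => absurd hh h
end

section
/- In the basic infinitary natural deduction system, the formula F_0 ∧ ⋀_{i≥0}(F_i → F_{i+1}) is equivalent (i.e., the biconditional is a theorem) to ⋀_{i≥0} F_i, for any bounded family of infinitary formulas (F_i) indexed by the natural numbers. -/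
open Classical

namespace IForm

variable {σ : Type}

theorem Deriv.mono {Γ Δ : Finset (IForm σ)} {F : IForm σ}
    (h : Deriv Γ F) (hs : Γ ⊆ Δ) : Deriv Δ F := by
  have := Deriv.weak Γ Δ F h
  rwa [Finset.union_eq_right.mpr hs] at this

theorem Deriv.hyp {Γ : Finset (IForm σ)} {F : IForm σ} (h : F ∈ Γ) :
    Deriv Γ F :=
  (Deriv.ax F).mono (Finset.singleton_subset_iff.mpr h)

theorem Deriv.mp {Γ : Finset (IForm σ)} {F G : IForm σ}
    (h1 : Deriv Γ F) (h2 : Deriv Γ (impl F G)) : Deriv Γ G := by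
  have := Deriv.implE Γ Γ F G h1 h2
  rwa [Finset.union_self] at this

end IForm

open IForm in
/-- In the basic system, `F₀ ∧ ⋀_{i≥0}(F_i → F_{i+1})` is
equivalent to `⋀_{i≥0} F_i`, for any family `(F_i)` of infinitary formulas
indexed by the natural numbers. -/
theorem basic_equiv_induction {σ : Type} (F : ℕ → IForm σ) :
    Deriv ∅ (biimp
      (and2 (F 0) (conj ℕ fun i => impl (F i) (F (i + 1))))
      (conj ℕ F)) := by
  set A : IForm σ := and2 (F 0) (conj ℕ fun i => impl (F i) (F (i + 1))) with hA
  have hAmem : A ∈ ({A} : Finset (IForm σ)) := Finset.mem_singleton_self A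
  -- forward: {A} ⊢ F n for all n
  have fwd : ∀ n, Deriv {A} (F n) := by
    intro n
    induction n with
    | zero =>
        exact Deriv.conjE _ Bool _ true (Deriv.hyp hAmem)
    | succ n ih =>
        have hc : Deriv {A} (conj ℕ fun i => impl (F i) (F (i + 1))) :=
          Deriv.conjE _ Bool _ false (Deriv.hyp hAmem)
        have himp : Deriv {A} (impl (F n) (F (n + 1))) :=
          Deriv.conjE _ ℕ _ n hc
        exact ih.mp himp
  -- backward: {conj ℕ F} ⊢ A
  have bwd : Deriv {conj ℕ F} A := by
    apply Deriv.conjI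
    intro b
    cases b with
    | true =>
        exact Deriv.conjE _ ℕ F 0 (Deriv.hyp (Finset.mem_singleton_self _))
    | false =>
        apply Deriv.conjI
        intro i
        apply Deriv.implI
        exact Deriv.conjE _ ℕ F (i + 1)
          ((Deriv.hyp (Finset.mem_singleton_self _)).mono
            (Finset.subset_insert _ _))
  apply Deriv.conjI
  intro b
  cases b with
  | true =>
      exact Deriv.implI ∅ A (conj ℕ F) (Deriv.conjI _ ℕ F fwd)
  | false =>
      exact Deriv.implI ∅ (conj ℕ F) A bwd
end

section
/- If an infinitary formula F is a theorem of the basic system, then every instance φF obtained by a substitution φ is also a theorem of the basic system (substitution property). -/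
open Classical

namespace IForm

/-- Application of a substitution `φ` (a family of formulas over `σ` indexed by
a disjoint signature `σ'`) to a formula over `σ ∪ σ'` (modeled as `σ ⊕ σ'`):
atoms of `σ` are unchanged, atoms `q` of `σ'` are replaced by `φ q`, and the
substitution commutes with the connectives. -/
def subst {σ σ' : Type} (φ : σ' → IForm σ) : IForm (σ ⊕ σ') → IForm σ
  | atom (Sum.inl p) => atom p
  | atom (Sum.inr q) => φ q
  | conj ι f => conj ι fun i => subst φ (f i)
  | disj ι f => disj ι fun i => subst φ (f i)
  | impl F G => impl (subst φ F) (subst φ G)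

end IForm

theorem basic_substitution_aux {σ σ' : Type} (φ : σ' → IForm σ)
    {Γ : Finset (IForm (σ ⊕ σ'))} {F : IForm (σ ⊕ σ')} (h : IForm.Deriv Γ F) :
    IForm.Deriv (Γ.image (IForm.subst φ)) (IForm.subst φ F) := by
  induction h with
  | ax F => simpa using IForm.Deriv.ax (IForm.subst φ F)
  | conjI Γ ι f _ ih => exact IForm.Deriv.conjI _ ι _ ih
  | conjE Γ ι f i _ ih => exact IForm.Deriv.conjE _ ι _ i ih
  | disjI Γ ι f i _ ih => exact IForm.Deriv.disjI _ ι _ i ih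
  | disjE Γ Δ ι f F _ _ ih1 ih2 =>
      rw [Finset.image_union]
      exact IForm.Deriv.disjE _ _ ι _ _ ih1 (fun i => by
        simpa [Finset.image_insert] using ih2 i)
  | implI Γ F G _ ih =>
      exact IForm.Deriv.implI _ _ _ (by simpa [Finset.image_insert] using ih)
  | implE Γ Δ F G _ _ ih1 ih2 =>
      rw [Finset.image_union]; exact IForm.Deriv.implE _ _ _ _ ih1 ih2
  | weak Γ Δ F _ ih =>
      rw [Finset.image_union]; exact IForm.Deriv.weak _ _ _ ih

/-- substitution property: If a formula `F` over `σ ∪ σ'` is a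
theorem of the basic system, then so is every instance `φF` obtained by a
substitution `φ`. -/
theorem basic_substitution {σ σ' : Type} (φ : σ' → IForm σ)
    (F : IForm (σ ⊕ σ')) (h : IForm.Deriv ∅ F) :
    IForm.Deriv ∅ (IForm.subst φ F) := by
  simpa using basic_substitution_aux φ h
end

section
/- For any infinitary formula F and any interpretation I, if I does not satisfy F then the sequent F^I ⇒ ⊥ is a theorem of the basic system. -/
open Classical

/-- For any infinitary formula `F` and interpretation `I`, if
`I` does not satisfy `F`, then the sequent `F^I ⇒ ⊥` is a theorem of the
basic system. -/
theorem reduct_refutes {σ : Type} (F : IForm σ) (I : Set σ)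
    (h : ¬ IForm.sat I F) :
    IForm.Deriv {IForm.reduct I F} IForm.bot := by
  induction F with
  | atom p =>
    simp only [IForm.sat] at h
    simp only [IForm.reduct, if_neg h]
    exact IForm.Deriv.ax _
  | conj ι f ih =>
    simp only [IForm.sat, not_forall] at h
    obtain ⟨i, hi⟩ := h
    have h1 : IForm.Deriv (∅ : Finset (IForm σ)) (IForm.impl (IForm.reduct I (f i)) IForm.bot) := by
      apply IForm.Deriv.implI
      simpa using ih i hi
    have h2 : IForm.Deriv {IForm.reduct I (IForm.conj ι f)} (IForm.reduct I (f i)) := by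
      simp only [IForm.reduct]
      exact IForm.Deriv.conjE _ _ _ i (IForm.Deriv.ax _)
    simpa using IForm.Deriv.implE _ _ _ _ h2 h1
  | disj ι f ih =>
    simp only [IForm.sat, not_exists] at h
    have := IForm.Deriv.disjE {IForm.reduct I (IForm.disj ι f)} ∅ ι
      (fun i => IForm.reduct I (f i)) IForm.bot
      (by simpa only [IForm.reduct] using IForm.Deriv.ax (IForm.reduct I (IForm.disj ι f)))
      (fun i => by simpa using ih i (h i))
    simpa using this
  | impl F G ihF ihG =>
    simp only [IForm.reduct, if_neg h]
    exact IForm.Deriv.ax _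
end

section
/- For any sequent S and any interpretation I, if S is a theorem of the basic infinitary system, then the reduct S^I is also a theorem of the basic system. -/
open Classical

namespace IForm

variable {σ : Type}

theorem botElim {Γ : Finset (IForm σ)} {F : IForm σ} (h : Deriv Γ bot) :
    Deriv Γ F := by
  have := Deriv.disjE Γ Γ Empty Empty.elim F h (fun i => i.elim)
  simpa using this

theorem cut {Γ : Finset (IForm σ)} {A B : IForm σ} (h1 : Deriv Γ A)
    (h2 : Deriv {A} B) : Deriv Γ B := by
  have h3 : Deriv (∅ : Finset (IForm σ)) (impl A B) := by
    apply Deriv.implI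
    simpa using h2
  have := Deriv.implE Γ ∅ A B h1 h3
  simpa using this

theorem soundness {Γ : Finset (IForm σ)} {F : IForm σ} (h : Deriv Γ F)
    (I : Set σ) (hΓ : ∀ G ∈ Γ, sat I G) : sat I F := by
  induction h with
  | ax F => exact hΓ F (by simp)
  | conjI Γ ι f _ ih => exact fun i => ih i hΓ
  | conjE Γ ι f i _ ih => exact ih hΓ i
  | disjI Γ ι f i _ ih => exact ⟨i, ih hΓ⟩
  | disjE Γ Δ ι f F _ _ ih1 ih2 =>
    obtain ⟨i, hi⟩ := ih1 (fun G hG => hΓ G (Finset.mem_union_left _ hG))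
    exact ih2 i (by
      intro G hG
      rcases Finset.mem_insert.1 hG with h | h
      · exact h ▸ hi
      · exact hΓ G (Finset.mem_union_right _ h))
  | implI Γ F G _ ih =>
    intro hF
    exact ih (by
      intro H hH
      rcases Finset.mem_insert.1 hH with h | h
      · exact h ▸ hF
      · exact hΓ H h)
  | implE Γ Δ F G _ _ ih1 ih2 =>
    exact ih2 (fun G hG => hΓ G (Finset.mem_union_right _ hG))
      (ih1 (fun G hG => hΓ G (Finset.mem_union_left _ hG)))
  | weak Γ Δ F _ ih => exact ih (fun G hG => hΓ G (Finset.mem_union_left _ hG))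

theorem reduct_unsat {F : IForm σ} {I : Set σ} (h : ¬ sat I F) :
    Deriv {reduct I F} bot := by
  induction F with
  | atom p =>
    simp only [sat] at h
    simp only [reduct, if_neg h]
    exact Deriv.ax bot
  | conj ι f ih =>
    simp only [sat, not_forall] at h
    obtain ⟨i, hi⟩ := h
    have h1 : Deriv {reduct I (conj ι f)} (reduct I (f i)) := by
      simpa [reduct] using Deriv.conjE {reduct I (conj ι f)} ι
        (fun j => reduct I (f j)) i (by simpa [reduct] using Deriv.ax (reduct I (conj ι f)))
    exact cut h1 (ih i hi)
  | disj ι f ih =>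
    simp only [sat, not_exists] at h
    have h1 : Deriv {reduct I (disj ι f)} (disj ι (fun j => reduct I (f j))) := by
      simpa [reduct] using Deriv.ax (reduct I (disj ι f))
    have := Deriv.disjE {reduct I (disj ι f)} ∅ ι (fun j => reduct I (f j)) bot h1
      (fun i => by simpa using ih i (h i))
    simpa using this
  | impl F G ihF ihG =>
    simp only [reduct, if_neg h]
    exact Deriv.ax bot

theorem deriv_bot_of_mem_unsat {Γ : Finset (IForm σ)} {I : Set σ} {H : IForm σ}
    (hH : H ∈ Γ) (h : ¬ sat I H) : Deriv (Γ.image (reduct I)) bot := by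
  have h1 : Deriv (Γ.image (reduct I)) (reduct I H) := by
    have := Deriv.weak {reduct I H} (Γ.image (reduct I)) (reduct I H) (Deriv.ax _)
    have heq : {reduct I H} ∪ Γ.image (reduct I) = Γ.image (reduct I) := by
      apply Finset.union_eq_right.2
      simp only [Finset.singleton_subset_iff]
      exact Finset.mem_image_of_mem _ hH
    rwa [heq] at this
  exact cut h1 (reduct_unsat h)

end IForm

/-- For any sequent `Γ ⇒ F` and interpretation `I`, if `Γ ⇒ F`
is a theorem of the basic system, then so is its reduct `Γ^I ⇒ F^I`. -/
theorem basic_reduct_theorem {σ : Type} (Γ : Finset (IForm σ)) (F : IForm σ)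
    (I : Set σ) (h : IForm.Deriv Γ F) :
    IForm.Deriv (Γ.image (IForm.reduct I)) (IForm.reduct I F) := by
  open IForm in
  induction h with
  | ax F => simpa using Deriv.ax (reduct I F)
  | conjI Γ ι f _ ih =>
    simp only [reduct]
    exact Deriv.conjI _ ι _ ih
  | conjE Γ ι f i _ ih =>
    simp only [reduct] at ih
    exact Deriv.conjE _ ι _ i ih
  | disjI Γ ι f i _ ih =>
    simp only [reduct]
    exact Deriv.disjI _ ι _ i ih
  | disjE Γ Δ ι f F _ _ ih1 ih2 =>
    simp only [reduct] at ih1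
    have := Deriv.disjE (Γ.image (reduct I)) (Δ.image (reduct I)) ι
      (fun j => reduct I (f j)) (reduct I F) ih1
      (fun i => by simpa [Finset.image_insert] using ih2 i)
    simpa [Finset.image_union] using this
  | implI Γ F G hd ih =>
    by_cases hs : sat I (impl F G)
    · simp only [reduct, if_pos hs]
      exact Deriv.implI _ _ _ (by simpa [Finset.image_insert] using ih)
    · simp only [reduct, if_neg hs]
      simp only [sat, not_forall] at hs
      obtain ⟨hF, hG⟩ := hs
      have : ¬ ∀ H ∈ insert F Γ, sat I H := by
        intro hall
        exact hG (soundness hd I hall)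
      push_neg at this
      obtain ⟨H, hH, hHn⟩ := this
      have hHΓ : H ∈ Γ := by
        rcases Finset.mem_insert.1 hH with h | h
        · exact absurd (h ▸ hF) (h ▸ hHn)
        · exact h
      exact deriv_bot_of_mem_unsat hHΓ hHn
  | implE Γ Δ F G _ _ ih1 ih2 =>
    by_cases hs : sat I (impl F G)
    · rw [show reduct I (impl F G) = impl (reduct I F) (reduct I G) from by
        simp [reduct, if_pos hs]] at ih2
      have := Deriv.implE (Γ.image (reduct I)) (Δ.image (reduct I)) _ _ ih1 ih2
      simpa [Finset.image_union] using this
    · rw [show reduct I (impl F G) = bot from by simp [reduct, if_neg hs]] at ih2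
      have := Deriv.weak (Δ.image (reduct I)) (Γ.image (reduct I)) _ (botElim (F := reduct I G) ih2)
      rw [Finset.union_comm] at this
      simpa [Finset.image_union] using this
  | weak Γ Δ F _ ih =>
    simpa [Finset.image_union] using Deriv.weak (Γ.image (reduct I)) (Δ.image (reduct I)) _ ih
end

section
/- If an infinitary formula F is a theorem of the basic system, then for any set 𝓗 of infinitary formulas, 𝓗 ∪ {F} has the same stable models as 𝓗. -/
open Classical

namespace IForm

variable {σ : Type}

theorem sat_reduct_self (I : Set σ) (F : IForm σ) : sat I (reduct I F) ↔ sat I F := by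
  induction F with
  | atom p =>
    by_cases h : p ∈ I <;> simp [reduct, sat, h, bot]
  | conj ι f ih => simp [reduct, sat, ih]
  | disj ι f ih => simp [reduct, sat, ih]
  | impl F G ihF ihG =>
    by_cases h : sat I (impl F G)
    · rw [reduct, if_pos h]
      exact ⟨fun _ => h, fun h' hF => ihG.2 (h' (ihF.1 hF))⟩
    · rw [reduct, if_neg h]
      simp only [sat, bot]
      exact ⟨fun hb => absurd hb (by rintro ⟨⟨⟩, _⟩), fun h' => absurd h' h⟩

theorem sat_of_sat_reduct {I J : Set σ} (hJI : J ⊆ I) (F : IForm σ) :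
    sat J (reduct I F) → sat I F := by
  induction F with
  | atom p =>
    by_cases h : p ∈ I <;> simp [reduct, sat, h, bot]
  | conj ι f ih => intro h i; exact ih i (h i)
  | disj ι f ih => rintro ⟨i, hi⟩; exact ⟨i, ih i hi⟩
  | impl F G ihF ihG =>
    by_cases h : sat I (impl F G)
    · intro _; exact h
    · rw [reduct, if_neg h]
      rintro ⟨⟨⟩, _⟩

theorem deriv_sound {Γ : Finset (IForm σ)} {F : IForm σ} (d : Deriv Γ F) :
    ∀ I J : Set σ, J ⊆ I → (∀ G ∈ Γ, sat J (reduct I G)) → sat J (reduct I F) := by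
  induction d with
  | ax F => intro I J _ h; exact h F (Finset.mem_singleton_self F)
  | conjI Γ ι f _ ih =>
    intro I J hJI h i
    exact ih i I J hJI h
  | conjE Γ ι f i _ ih =>
    intro I J hJI h
    exact ih I J hJI h i
  | disjI Γ ι f i _ ih =>
    intro I J hJI h
    exact ⟨i, ih I J hJI h⟩
  | disjE Γ Δ ι f F _ _ ih1 ih2 =>
    intro I J hJI h
    obtain ⟨i, hi⟩ := ih1 I J hJI (fun G hG => h G (Finset.mem_union_left _ hG))
    refine ih2 i I J hJI ?_
    intro G hG
    rcases Finset.mem_insert.mp hG with rfl | hG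
    · exact hi
    · exact h G (Finset.mem_union_right _ hG)
  | implI Γ F G _ ih =>
    intro I J hJI h
    have hsI : sat I (impl F G) := by
      intro hF
      have : sat I (reduct I G) := by
        refine ih I I (le_refl I) ?_
        intro G' hG'
        rcases Finset.mem_insert.mp hG' with rfl | hG'
        · exact (sat_reduct_self I G').2 hF
        · exact (sat_reduct_self I G').2 (sat_of_sat_reduct hJI G' (h G' hG'))
      exact (sat_reduct_self I G).1 this
    have : reduct I (impl F G) = impl (reduct I F) (reduct I G) := by
      simp [reduct, hsI]
    rw [this]
    intro hF
    refine ih I J hJI ?_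
    intro G' hG'
    rcases Finset.mem_insert.mp hG' with rfl | hG'
    · exact hF
    · exact h G' hG'
  | implE Γ Δ F G _ _ ih1 ih2 =>
    intro I J hJI h
    have hF := ih1 I J hJI (fun G hG => h G (Finset.mem_union_left _ hG))
    have hFG := ih2 I J hJI (fun G hG => h G (Finset.mem_union_right _ hG))
    by_cases hs : sat I (impl F G)
    · rw [show reduct I (impl F G) = impl (reduct I F) (reduct I G) by simp [reduct, hs]] at hFG
      exact hFG hF
    · rw [show reduct I (impl F G) = bot by simp [reduct, hs]] at hFG
      exact absurd hFG (by simp [sat, bot])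
  | weak Γ Δ F _ ih =>
    intro I J hJI h
    exact ih I J hJI (fun G hG => h G (Finset.mem_union_left _ hG))

end IForm

/-- Main Theorem (a): If a formula `F` is a theorem of the
basic system, then for any set `𝓗` of infinitary formulas, `𝓗 ∪ {F}` has
the same stable models as `𝓗`. -/
theorem main_theorem_a {σ : Type} (F : IForm σ) (h : IForm.Deriv ∅ F)
    (H : Set (IForm σ)) :
    ∀ I : Set σ, IForm.StableModel I (H ∪ {F}) ↔ IForm.StableModel I H := by
  intro I
  have key : ∀ J : Set σ, J ⊆ I → IForm.sat J (IForm.reduct I F) := by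
    intro J hJI
    exact IForm.deriv_sound h I J hJI (by simp)
  constructor
  · rintro ⟨h1, h2⟩
    refine ⟨?_, ?_⟩
    · intro G hG
      obtain ⟨G', hG', rfl⟩ := hG
      exact h1 _ ⟨G', Or.inl hG', rfl⟩
    · intro J hJ hJI
      refine h2 J ?_ hJI
      intro G hG
      obtain ⟨G', hG', rfl⟩ := hG
      rcases hG' with hG' | hG'
      · exact hJ _ ⟨G', hG', rfl⟩
      · rcases hG' with rfl
        exact key J hJI
  · rintro ⟨h1, h2⟩
    refine ⟨?_, ?_⟩
    · intro G hG
      obtain ⟨G', hG', rfl⟩ := hG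
      rcases hG' with hG' | hG'
      · exact h1 _ ⟨G', hG', rfl⟩
      · rcases hG' with rfl
        exact key I (le_refl I)
    · intro J hJ hJI
      refine h2 J ?_ hJI
      intro G hG
      obtain ⟨G', hG', rfl⟩ := hG
      exact hJ _ ⟨G', Or.inl hG', rfl⟩
end
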